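/- Let X be a finite partially ordered set whose comparability graph G is connected, let T be a spanning tree of G, and let R be a ring. Then every multiplicative automorphism of I(X,R) is inner if and only if the identity is the only multiplicative automorphism ψ of I(X,R) satisfying ψ(e_{xy}) = e_{xy} for every tree edge x < y. -/

import Mathlib

/-- A ring automorphism of the incidence algebra is *multiplicative* if it fixes every
function supported on the diagonal and maps functions vanishing on the diagonal to
functions vanishing on the diagonal. -/
def IsMultAut {X R : Type*} [Preorder X] [LocallyFiniteOrder X] [DecidableEq X] [Ring R]
    (φ : RingAut (IncidenceAlgebra R X)) : Prop :=
  (∀ f : IncidenceAlgebra R X, (∀ x y : X, x ≠ y → f x y = 0) → φ f = f) ∧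
  (∀ f : IncidenceAlgebra R X, (∀ x : X, f x x = 0) → ∀ x : X, (φ f) x x = 0)

/-- An automorphism of the incidence algebra is a *fractional automorphism* if it is the
inner automorphism given by a diagonal unit whose diagonal entries are invertible central
elements of `R`. -/
def IsFracAut {X R : Type*} [Preorder X] [LocallyFiniteOrder X] [DecidableEq X] [Ring R]
    (φ : RingAut (IncidenceAlgebra R X)) : Prop :=
  ∃ (v : X → R) (d : (IncidenceAlgebra R X)ˣ),
    (∀ x : X, v x ∈ Set.center R ∧ IsUnit (v x)) ∧
    (∀ x : X, (d : IncidenceAlgebra R X) x x = v x) ∧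
    (∀ x y : X, x ≠ y → (d : IncidenceAlgebra R X) x y = 0) ∧
    (∀ f : IncidenceAlgebra R X, φ f = ↑d⁻¹ * f * ↑d)

/-- The comparability graph of a partially ordered set: `x` and `y` are adjacent iff
they are distinct and comparable. -/
def compGraph (X : Type*) [PartialOrder X] : SimpleGraph X where
  Adj x y := x < y ∨ y < x
  symm := ⟨fun _ _ h => h.symm⟩
  loopless := ⟨fun x h => h.elim (lt_irrefl x) (lt_irrefl x)⟩

/-- The element `e_{xy}` of the incidence algebra: value `1` at `(x, y)` and `0`
elsewhere. -/
def eSingle {X : Type*} (R : Type*) [Ring R] [PartialOrder X] [DecidableEq X]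
    (x y : X) (h : x ≤ y) : IncidenceAlgebra R X :=
  ⟨fun s t => if s = x ∧ t = y then 1 else 0, fun s t hst => by
    try dsimp only
    split_ifs with h'
    · exact absurd ((h'.1.trans_le h).trans_eq h'.2.symm) hst
    · rfl⟩



open Finset

namespace IncAux

set_option linter.unusedSectionVars false

variable {X R : Type*} [PartialOrder X] [LocallyFiniteOrder X] [DecidableEq X] [Ring R]

lemma eSingle_apply (x y : X) (h : x ≤ y) (s t : X) :
    _root_.eSingle R x y h s t = if s = x ∧ t = y then 1 else 0 := rfl

/-- constant diagonal -/
def dconst (R : Type*) [Ring R] (X : Type*) [PartialOrder X] [DecidableEq X] (r : R) :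
    IncidenceAlgebra R X :=
  ⟨fun s t => if s = t then r else 0, fun s t hst => by
    rw [if_neg]; rintro rfl; exact hst le_rfl⟩

lemma dconst_apply (r : R) (s t : X) : dconst R X r s t = if s = t then r else 0 := rfl

/-- diagonal with varying entries -/
def ddiag (R : Type*) [Ring R] (X : Type*) [PartialOrder X] [DecidableEq X] (v : X → R) :
    IncidenceAlgebra R X :=
  ⟨fun s t => if s = t then v s else 0, fun s t hst => by
    rw [if_neg]; rintro rfl; exact hst le_rfl⟩

lemma ddiag_apply (v : X → R) (s t : X) : ddiag R X v s t = if s = t then v s else 0 := rfl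

lemma ddiag_mul_apply (v : X → R) (f : IncidenceAlgebra R X) (s t : X) :
    (ddiag R X v * f) s t = v s * f s t := by
  rw [IncidenceAlgebra.mul_apply, Finset.sum_eq_single s]
  · rw [ddiag_apply, if_pos rfl]
  · intro b hb hbs
    rw [ddiag_apply, if_neg (Ne.symm hbs), zero_mul]
  · intro hs
    rw [ddiag_apply, if_pos rfl]
    have hst : ¬ s ≤ t := by
      intro hle; exact hs (Finset.mem_Icc.2 ⟨le_rfl, hle⟩)
    simp [IncidenceAlgebra.apply_eq_zero_of_not_le hst f]

lemma mul_ddiag_apply (v : X → R) (f : IncidenceAlgebra R X) (s t : X) :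
    (f * ddiag R X v) s t = f s t * v t := by
  rw [IncidenceAlgebra.mul_apply, Finset.sum_eq_single t]
  · rw [ddiag_apply, if_pos rfl]
  · intro b hb hbt
    rw [ddiag_apply, if_neg hbt, mul_zero]
  · intro ht
    rw [ddiag_apply, if_pos rfl]
    have hst : ¬ s ≤ t := by
      intro hle; exact ht (Finset.mem_Icc.2 ⟨hle, le_rfl⟩)
    simp [IncidenceAlgebra.apply_eq_zero_of_not_le hst f]

lemma dconst_mul_apply (r : R) (f : IncidenceAlgebra R X) (s t : X) :
    (dconst R X r * f) s t = r * f s t := by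
  have : dconst R X r = ddiag R X (fun _ => r) := rfl
  rw [this, ddiag_mul_apply]

lemma mul_dconst_apply (r : R) (f : IncidenceAlgebra R X) (s t : X) :
    (f * dconst R X r) s t = f s t * r := by
  have : dconst R X r = ddiag R X (fun _ => r) := rfl
  rw [this, mul_ddiag_apply]

lemma single_mul_apply (x y : X) (h : x ≤ y) (g : IncidenceAlgebra R X) (s t : X) :
    (_root_.eSingle R x y h * g) s t = if s = x then g y t else 0 := by
  rw [IncidenceAlgebra.mul_apply]
  split_ifs with hs
  · subst hs
    rw [Finset.sum_eq_single y]
    · rw [eSingle_apply, if_pos ⟨rfl, rfl⟩, one_mul]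
    · intro b hb hby
      rw [eSingle_apply, if_neg (by simp [hby]), zero_mul]
    · intro hy
      have hyt : ¬ y ≤ t := by
        intro hle; exact hy (Finset.mem_Icc.2 ⟨h, hle⟩)
      simp [eSingle_apply, IncidenceAlgebra.apply_eq_zero_of_not_le hyt g]
  · apply Finset.sum_eq_zero
    intro b hb
    rw [eSingle_apply, if_neg (by simp [hs]), zero_mul]

lemma mul_single_apply (x y : X) (h : x ≤ y) (g : IncidenceAlgebra R X) (s t : X) :
    (g * _root_.eSingle R x y h) s t = if t = y then g s x else 0 := by
  rw [IncidenceAlgebra.mul_apply]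
  split_ifs with ht
  · subst ht
    rw [Finset.sum_eq_single x]
    · rw [eSingle_apply, if_pos ⟨rfl, rfl⟩, mul_one]
    · intro b hb hbx
      rw [eSingle_apply, if_neg (by simp [hbx]), mul_zero]
    · intro hx
      have hsx : ¬ s ≤ x := by
        intro hle; exact hx (Finset.mem_Icc.2 ⟨hle, h⟩)
      simp [eSingle_apply, IncidenceAlgebra.apply_eq_zero_of_not_le hsx g]
  · apply Finset.sum_eq_zero
    intro b hb
    rw [eSingle_apply, if_neg (by simp [ht]), mul_zero]

end IncAux

namespace IncAux

set_option linter.unusedSectionVars false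

variable {X R : Type*} [PartialOrder X] [LocallyFiniteOrder X] [DecidableEq X] [Ring R]

lemma ddiag_mul_ddiag (v w : X → R) :
    ddiag R X v * ddiag R X w = ddiag R X (fun x => v x * w x) := by
  ext s t _
  rw [ddiag_mul_apply, ddiag_apply, ddiag_apply]
  split_ifs with h
  · subst h; rfl
  · rw [mul_zero]

lemma ddiag_one : ddiag R X (fun _ => (1 : R)) = 1 := by
  ext s t _
  rw [ddiag_apply, IncidenceAlgebra.one_apply]

lemma dconst_one : dconst R X (1 : R) = 1 := ddiag_one

/-- the diagonal unit from pointwise units -/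
def ddiagUnit (v w : X → R) (hvw : ∀ x, v x * w x = 1) (hwv : ∀ x, w x * v x = 1) :
    (IncidenceAlgebra R X)ˣ where
  val := ddiag R X v
  inv := ddiag R X w
  val_inv := by rw [ddiag_mul_ddiag]; simp only [hvw]; exact ddiag_one
  inv_val := by rw [ddiag_mul_ddiag]; simp only [hwv]; exact ddiag_one

/-- evaluation as an additive monoid hom -/
def evalHom (s t : X) : IncidenceAlgebra R X →+ R where
  toFun f := f s t
  map_zero' := rfl
  map_add' _ _ := rfl

/-- conjugation by a unit as a ring automorphism -/
def innerConj {A : Type*} [Ring A] (u : Aˣ) : RingAut A where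
  toFun f := ↑u⁻¹ * f * ↑u
  invFun f := ↑u * f * ↑u⁻¹
  left_inv f := by simp [mul_assoc]
  right_inv f := by simp [mul_assoc]
  map_mul' f g := by
    simp only [mul_assoc, Units.mul_inv_cancel_left, Units.inv_mul_cancel_left, one_mul]
  map_add' f g := by noncomm_ring

lemma innerConj_apply {A : Type*} [Ring A] (u : Aˣ) (f : A) :
    innerConj u f = ↑u⁻¹ * f * ↑u := rfl

lemma innerConj_symm_apply {A : Type*} [Ring A] (u : Aˣ) (f : A) :
    (innerConj u).symm f = ↑u * f * ↑u⁻¹ := rfl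

end IncAux

namespace IncAux

set_option linter.unusedSectionVars false

variable {X R : Type*} [PartialOrder X] [LocallyFiniteOrder X] [DecidableEq X] [Ring R]

lemma eSingle_diag_supported (x : X) :
    ∀ s t : X, s ≠ t → _root_.eSingle R x x le_rfl s t = 0 := by
  intro s t hst
  rw [eSingle_apply, if_neg]
  rintro ⟨rfl, rfl⟩; exact hst rfl

lemma dconst_diag_supported (r : R) :
    ∀ s t : X, s ≠ t → dconst R X r s t = 0 := by
  intro s t hst
  rw [dconst_apply, if_neg hst]

lemma ddiag_diag_supported (v : X → R) :
    ∀ s t : X, s ≠ t → ddiag R X v s t = 0 := by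
  intro s t hst
  rw [ddiag_apply, if_neg hst]

lemma sandwich (x y : X) (h : x ≤ y) :
    _root_.eSingle R x x le_rfl * _root_.eSingle R x y h * _root_.eSingle R y y le_rfl = _root_.eSingle R x y h := by
  ext s t _
  rw [mul_single_apply, eSingle_apply]
  by_cases ht : t = y
  · rw [if_pos ht, single_mul_apply, eSingle_apply]
    by_cases hs : s = x
    · simp [hs, ht]
    · simp [hs]
  · rw [if_neg ht, if_neg (by rintro ⟨rfl, rfl⟩; exact ht rfl)]

variable {φ : RingAut (IncidenceAlgebra R X)}

lemma shape (hφ : IsMultAut φ) (x y : X) (h : x ≤ y) :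
    φ (_root_.eSingle R x y h) = dconst R X (φ (_root_.eSingle R x y h) x y) * _root_.eSingle R x y h := by
  have hxx := hφ.1 (_root_.eSingle R x x le_rfl) (eSingle_diag_supported x)
  have hyy := hφ.1 (_root_.eSingle R y y le_rfl) (eSingle_diag_supported y)
  have key : _root_.eSingle R x x le_rfl * φ (_root_.eSingle R x y h) * _root_.eSingle R y y le_rfl
      = φ (_root_.eSingle R x y h) := by
    have := congrArg φ (sandwich (R := R) x y h)
    rwa [map_mul, map_mul, hxx, hyy] at this
  ext s t _
  conv_lhs => rw [← key]
  rw [mul_single_apply, dconst_mul_apply, eSingle_apply, single_mul_apply]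
  by_cases h1 : t = y <;> by_cases h2 : s = x <;> simp [h1, h2]

lemma central (hφ : IsMultAut φ) (x y : X) (h : x ≤ y) (r : R) :
    r * (φ (_root_.eSingle R x y h) x y) = (φ (_root_.eSingle R x y h) x y) * r := by
  have hcomm : dconst R X r * _root_.eSingle R x y h = _root_.eSingle R x y h * dconst R X r := by
    ext s t _
    rw [dconst_mul_apply, mul_dconst_apply, eSingle_apply]
    split_ifs <;> simp
  have := congrArg φ hcomm
  rw [map_mul, map_mul, hφ.1 (dconst R X r) (dconst_diag_supported r)] at this
  have := congrFun (congrFun (congrArg DFunLike.coe this) x) y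
  rwa [dconst_mul_apply, mul_dconst_apply] at this

lemma isMultAut_symm (hφ : IsMultAut φ) : IsMultAut (φ.symm : RingAut (IncidenceAlgebra R X)) := by
  constructor
  · intro f hf
    conv_lhs => rw [← hφ.1 f hf]
    exact φ.symm_apply_apply f
  · intro f hf x
    set g := φ.symm f with hg
    have hgf : φ g = f := φ.apply_symm_apply f
    have hoff : ∀ z : X, (g - ddiag R X (fun z => g z z)) z z = 0 := by
      intro z
      rw [IncidenceAlgebra.sub_apply, ddiag_apply, if_pos rfl, sub_self]
    have hdec : φ g = ddiag R X (fun z => g z z) + φ (g - ddiag R X (fun z => g z z)) := by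
      conv_lhs =>
        rw [show g = ddiag R X (fun z => g z z) + (g - ddiag R X (fun z => g z z)) by abel]
      rw [map_add, hφ.1 _ (ddiag_diag_supported _)]
    have := congrFun (congrFun (congrArg DFunLike.coe (hgf.symm.trans hdec)) x) x
    rw [IncidenceAlgebra.add_apply, ddiag_apply, if_pos rfl,
      hφ.2 _ hoff x, add_zero] at this
    rw [hf x] at this
    exact this.symm

lemma unit_prop (hφ : IsMultAut φ) (x y : X) (h : x ≤ y) :
    (φ.symm (_root_.eSingle R x y h) x y) * (φ (_root_.eSingle R x y h) x y) = 1 ∧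
    (φ (_root_.eSingle R x y h) x y) * (φ.symm (_root_.eSingle R x y h) x y) = 1 := by
  set c := φ (_root_.eSingle R x y h) x y with hc
  set c' := φ.symm (_root_.eSingle R x y h) x y with hc'
  have h1 : φ.symm (_root_.eSingle R x y h) = dconst R X c' * _root_.eSingle R x y h :=
    shape (isMultAut_symm hφ) x y h
  constructor
  · have h2 : φ (dconst R X c' * _root_.eSingle R x y h) = _root_.eSingle R x y h := by
      rw [← h1]; exact φ.apply_symm_apply _
    rw [map_mul, hφ.1 (dconst R X c') (dconst_diag_supported c'), shape hφ x y h] at h2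
    have := congrFun (congrFun (congrArg DFunLike.coe h2) x) y
    rw [dconst_mul_apply, dconst_mul_apply, eSingle_apply, if_pos ⟨rfl, rfl⟩, mul_one] at this
    exact this
  · have h1' : φ.symm (_root_.eSingle R x y h) = _root_.eSingle R x y h * dconst R X c' := by
      rw [h1]; ext s t _
      rw [dconst_mul_apply, mul_dconst_apply, eSingle_apply]
      split_ifs <;> simp
    have h2 : φ (_root_.eSingle R x y h * dconst R X c') = _root_.eSingle R x y h := by
      rw [← h1']; exact φ.apply_symm_apply _
    rw [map_mul, hφ.1 (dconst R X c') (dconst_diag_supported c'), shape hφ x y h] at h2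
    have := congrFun (congrFun (congrArg DFunLike.coe h2) x) y
    rw [mul_dconst_apply, dconst_mul_apply, eSingle_apply, if_pos ⟨rfl, rfl⟩, mul_one] at this
    exact this

end IncAux

namespace IncAux

set_option linter.unusedSectionVars false

variable {X R : Type*} [PartialOrder X] [LocallyFiniteOrder X] [DecidableEq X] [Ring R]

open Classical in
lemma decomp [Fintype X] (f : IncidenceAlgebra R X) :
    f = ddiag R X (fun x => f x x) +
      ∑ p : X × X, if hp : p.1 < p.2 then dconst R X (f p.1 p.2) * _root_.eSingle R p.1 p.2 hp.le
        else 0 := by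
  ext s t hst
  have hsum : (∑ p : X × X, if hp : p.1 < p.2 then dconst R X (f p.1 p.2) *
        _root_.eSingle R p.1 p.2 hp.le else 0) s t
      = ∑ p : X × X, evalHom s t (if hp : p.1 < p.2 then dconst R X (f p.1 p.2) *
        _root_.eSingle R p.1 p.2 hp.le else 0) :=
    map_sum (evalHom s t) _ Finset.univ
  rw [IncidenceAlgebra.add_apply, hsum]
  have hterm : ∀ p : X × X,
      evalHom s t (if hp : p.1 < p.2 then dconst R X (f p.1 p.2) * _root_.eSingle R p.1 p.2 hp.le
        else 0) = if s = p.1 ∧ t = p.2 ∧ p.1 < p.2 then f p.1 p.2 else 0 := by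
    intro p
    by_cases hp : p.1 < p.2
    · rw [dif_pos hp]
      show (dconst R X (f p.1 p.2) * _root_.eSingle R p.1 p.2 hp.le) s t = _
      rw [dconst_mul_apply, eSingle_apply]
      by_cases h2 : s = p.1 ∧ t = p.2
      · rw [if_pos h2, if_pos ⟨h2.1, h2.2, hp⟩, mul_one]
      · rw [if_neg h2, if_neg (by rintro ⟨a, b, c⟩; exact h2 ⟨a, b⟩), mul_zero]
    · rw [dif_neg hp, if_neg (by rintro ⟨_, _, c⟩; exact hp c)]
      rfl
  rw [Finset.sum_congr rfl (fun p _ => hterm p)]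
  rw [ddiag_apply]
  rcases eq_or_lt_of_le hst with h | h
  · subst h
    rw [if_pos rfl, Finset.sum_eq_zero, add_zero]
    intro p _
    rw [if_neg]
    rintro ⟨h1, h2, hlt⟩
    exact absurd (h1.symm.trans h2) (ne_of_lt hlt)
  · rw [if_neg (ne_of_lt h), Finset.sum_eq_single (s, t), if_pos ⟨rfl, rfl, h⟩, zero_add]
    · intro p _ hp
      rw [if_neg]
      rintro ⟨rfl, rfl, -⟩
      exact hp (Prod.mk.eta)
    · intro habs
      exact absurd (Finset.mem_univ _) habs

open Classical in
lemma aut_eq_one [Fintype X] (ψ : RingAut (IncidenceAlgebra R X))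
    (hdiag : ∀ f : IncidenceAlgebra R X, (∀ x y : X, x ≠ y → f x y = 0) → ψ f = f)
    (hsingle : ∀ (x y : X) (h : x < y), ψ (_root_.eSingle R x y h.le) = _root_.eSingle R x y h.le) :
    ψ = 1 := by
  have key : ∀ f, ψ f = f := by
    intro f
    conv_lhs => rw [decomp f]
    rw [map_add, map_sum, hdiag _ (ddiag_diag_supported _)]
    have : ∀ p : X × X,
        ψ (if hp : p.1 < p.2 then dconst R X (f p.1 p.2) * _root_.eSingle R p.1 p.2 hp.le else 0)
        = (if hp : p.1 < p.2 then dconst R X (f p.1 p.2) * _root_.eSingle R p.1 p.2 hp.le else 0) := by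
      intro p
      by_cases hp : p.1 < p.2
      · rw [dif_pos hp, map_mul, hdiag _ (dconst_diag_supported _), hsingle _ _ hp]
      · rw [dif_neg hp, map_zero]
    rw [Finset.sum_congr rfl (fun p _ => this p)]
    exact (decomp f).symm
  exact RingEquiv.ext key
end IncAux

namespace IncAux

set_option linter.unusedSectionVars false

variable {X R : Type*} [PartialOrder X] [LocallyFiniteOrder X] [DecidableEq X] [Ring R]

lemma dconst_mul_dconst (r r' : R) :
    dconst R X r * dconst R X r' = dconst R X (r * r') :=
  ddiag_mul_ddiag (fun _ => r) (fun _ => r')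

end IncAux

open SimpleGraph

noncomputable def walkWeight {X M : Type*} [CommGroup M] {T : SimpleGraph X}
    (s : ∀ a b, T.Adj a b → M) : ∀ {a b : X}, T.Walk a b → M
  | _, _, SimpleGraph.Walk.nil => 1
  | _, _, SimpleGraph.Walk.cons h p => s _ _ h * walkWeight s p

lemma walkWeight_nil {X M : Type*} [CommGroup M] {T : SimpleGraph X}
    (s : ∀ a b, T.Adj a b → M) (a : X) :
    walkWeight s (SimpleGraph.Walk.nil : T.Walk a a) = 1 := rfl

lemma walkWeight_cons {X M : Type*} [CommGroup M] {T : SimpleGraph X}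
    (s : ∀ a b, T.Adj a b → M) {a b c : X} (h : T.Adj a b) (p : T.Walk b c) :
    walkWeight s (SimpleGraph.Walk.cons h p) = s a b h * walkWeight s p := rfl

lemma walkWeight_append {X M : Type*} [CommGroup M] {T : SimpleGraph X}
    (s : ∀ a b, T.Adj a b → M) {a b c : X} (p : T.Walk a b) (q : T.Walk b c) :
    walkWeight s (p.append q) = walkWeight s p * walkWeight s q := by
  induction p with
  | nil => rw [walkWeight_nil, one_mul]; rfl
  | cons h p ih =>
      rw [SimpleGraph.Walk.cons_append, walkWeight_cons, walkWeight_cons, ih, mul_assoc]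

lemma tree_potential {X : Type*} [DecidableEq X] (T : SimpleGraph X)
    (hTconn : T.Connected) (hTacyc : T.IsAcyclic) {M : Type*} [CommGroup M]
    (s : ∀ a b, T.Adj a b → M)
    (hs : ∀ (a b : X) (h : T.Adj a b), s b a h.symm = (s a b h)⁻¹) :
    ∃ v : X → M, ∀ (a b : X) (h : T.Adj a b), v b = (s a b h)⁻¹ * v a := by
  classical
  obtain ⟨x0⟩ := hTconn.nonempty
  have hreach : ∀ x : X, Nonempty (T.Walk x x0) := fun x => hTconn.preconnected x x0
  set P : ∀ x : X, T.Walk x x0 := fun x => (Classical.choice (hreach x)).bypass with hPdef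
  have hP : ∀ x, (P x).IsPath := fun x => SimpleGraph.Walk.bypass_isPath _
  have huniq := SimpleGraph.isAcyclic_iff_path_unique.mp hTacyc
  set v : X → M := fun x => walkWeight s (P x) with hvdef
  have key : ∀ (x : X) (q : T.Walk x x0), q.IsPath → walkWeight s q = v x := by
    intro x q hq
    have h2 : (⟨q, hq⟩ : T.Path x x0) = ⟨P x, hP x⟩ := huniq _ _
    exact congrArg (fun p : T.Path x x0 => walkWeight s p.1) h2
  refine ⟨v, ?_⟩
  intro a b h
  by_cases hb : b ∈ (P a).support
  · have hsplit := SimpleGraph.Walk.take_spec (P a) hb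
    have htake : ((P a).takeUntil b hb).IsPath := (hP a).takeUntil hb
    have hdrop : ((P a).dropUntil b hb).IsPath := (hP a).dropUntil hb
    have he : (P a).takeUntil b hb = SimpleGraph.Walk.cons h SimpleGraph.Walk.nil := by
      have h3 := huniq (⟨_, htake⟩ : T.Path a b) (SimpleGraph.Path.singleton h)
      exact congrArg Subtype.val h3
    have hva : v a = s a b h * v b := by
      conv_lhs => rw [hvdef]
      simp only []
      rw [← hsplit, walkWeight_append, he, walkWeight_cons, walkWeight_nil, mul_one,
        key b _ hdrop]
    rw [hva, inv_mul_cancel_left]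
  · have hcons : (SimpleGraph.Walk.cons h.symm (P a)).IsPath := (hP a).cons hb
    have h4 := key b _ hcons
    rw [walkWeight_cons, hs a b h] at h4
    rw [← h4]

/-- For a finite poset with connected comparability graph and spanning
tree `T`, every multiplicative automorphism of the incidence algebra is inner iff the
identity is the only multiplicative automorphism fixing all `e_{xy}` for tree edges
`x < y` (Corollary 3.8). -/
theorem all_mult_aut_inner_iff {X R : Type*} [PartialOrder X] [Fintype X]
    [LocallyFiniteOrder X] [DecidableEq X] [Ring R]
    (hG : (compGraph X).Connected)
    (T : SimpleGraph X) (hT : T ≤ compGraph X) (hTconn : T.Connected)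
    (hTacyc : T.IsAcyclic) :
    (∀ φ : RingAut (IncidenceAlgebra R X), IsMultAut φ →
      ∃ u : (IncidenceAlgebra R X)ˣ, ∀ f : IncidenceAlgebra R X, φ f = ↑u⁻¹ * f * ↑u) ↔
    (∀ ψ : RingAut (IncidenceAlgebra R X), IsMultAut ψ →
      (∀ (x y : X) (h : x < y), T.Adj x y →
        ψ (eSingle R x y h.le) = eSingle R x y h.le) → ψ = 1) := by
  classical
  constructor
  · -- every multiplicative automorphism inner → only identity fixes tree edges
    intro Hinner ψ hψ hfix
    obtain ⟨u, hu⟩ := Hinner ψ hψ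
    have hshape : ∀ (x y : X) (h : x ≤ y),
        ψ (eSingle R x y h) = IncAux.dconst R X (ψ (eSingle R x y h) x y) * eSingle R x y h :=
      fun x y h => IncAux.shape hψ x y h
    set w : X → R := fun x => (u : IncidenceAlgebra R X) x x with hw_def
    set w' : X → R := fun x => ((u⁻¹ : (IncidenceAlgebra R X)ˣ) : IncidenceAlgebra R X) x x
      with hw'_def
    have hw'w : ∀ x : X, w' x * w x = 1 := by
      intro x
      have h1 := congrFun (congrFun (congrArg DFunLike.coe u.inv_mul) x) x
      rwa [IncidenceAlgebra.mul_apply, Finset.Icc_self, Finset.sum_singleton,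
        IncidenceAlgebra.one_apply, if_pos rfl] at h1
    have hkey : ∀ (x y : X) (h : x < y),
        w x * (ψ (eSingle R x y h.le) x y) = w y := by
      intro x y h
      have h1 : (u : IncidenceAlgebra R X) * ψ (eSingle R x y h.le)
          = eSingle R x y h.le * (u : IncidenceAlgebra R X) := by
        rw [hu, ← mul_assoc, Units.mul_inv_cancel_left]
      rw [hshape x y h.le, ← mul_assoc] at h1
      have h2 := congrFun (congrFun (congrArg DFunLike.coe h1) x) y
      rwa [IncAux.mul_single_apply, if_pos (rfl : y = y), IncAux.mul_dconst_apply,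
        IncAux.single_mul_apply, if_pos (rfl : x = x)] at h2
    have hadjconst : ∀ a b : X, T.Adj a b → w a = w b := by
      have htree : ∀ (x y : X) (h : x < y), T.Adj x y → w x = w y := by
        intro x y h hadj
        have h1 := hkey x y h
        rwa [hfix x y h hadj, IncAux.eSingle_apply, if_pos ⟨rfl, rfl⟩, mul_one] at h1
      intro a b hadj
      rcases (hT hadj : a < b ∨ b < a) with h | h
      · exact htree a b h hadj
      · exact (htree b a h hadj.symm).symm
    have hconst : ∀ a b : X, w a = w b := by
      have hwalk : ∀ {p q : X}, T.Walk p q → w p = w q := by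
        intro p q walk
        induction walk with
        | nil => rfl
        | cons hadj _ ih => exact (hadjconst _ _ hadj).trans ih
      intro a b
      exact (hTconn.preconnected a b).elim fun walk => hwalk walk
    have hc1 : ∀ (x y : X) (h : x < y), ψ (eSingle R x y h.le) x y = 1 := by
      intro x y h
      have h1 := hkey x y h
      rw [hconst x y] at h1
      have h2 : w' y * (w y * ψ (eSingle R x y h.le) x y) = w' y * w y := by rw [h1]
      rwa [← mul_assoc, hw'w, one_mul] at h2
    apply IncAux.aut_eq_one ψ hψ.1
    intro x y h
    rw [hshape x y h.le, hc1 x y h, IncAux.dconst_one, one_mul]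
  · -- only identity fixes tree edges → every multiplicative automorphism inner
    intro Honly φ hφ
    have hφs : IsMultAut (φ.symm : RingAut (IncidenceAlgebra R X)) := IncAux.isMultAut_symm hφ
    have hcent : ∀ (x y : X) (h : x < y) (r : R),
        r * (φ (eSingle R x y h.le) x y) = (φ (eSingle R x y h.le) x y) * r :=
      fun x y h => IncAux.central hφ x y h.le
    have hcent' : ∀ (x y : X) (h : x < y) (r : R),
        r * (φ.symm (eSingle R x y h.le) x y) = (φ.symm (eSingle R x y h.le) x y) * r :=
      fun x y h => IncAux.central hφs x y h.le
    have hunit := fun (x y : X) (h : x < y) => IncAux.unit_prop hφ x y h.le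
    set M := (Subring.center R)ˣ with hM_def
    set cu : ∀ x y : X, x < y → M := fun x y h =>
      { val := ⟨φ (eSingle R x y h.le) x y, Subring.mem_center_iff.2 (hcent x y h)⟩
        inv := ⟨φ.symm (eSingle R x y h.le) x y, Subring.mem_center_iff.2 (hcent' x y h)⟩
        val_inv := Subtype.ext (hunit x y h).2
        inv_val := Subtype.ext (hunit x y h).1 } with hcu_def
    have hs : ∀ (a b : X) (h : T.Adj a b),
        (if hlt : b < a then cu b a hlt else (cu a b ((hT h.symm).resolve_left hlt))⁻¹)
        = (if hlt : a < b then cu a b hlt else (cu b a ((hT h).resolve_left hlt))⁻¹)⁻¹ := by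
      intro a b h
      rcases (hT h : a < b ∨ b < a) with hlt | hlt
      · rw [dif_neg (asymm hlt), dif_pos hlt]
      · rw [dif_pos hlt, dif_neg (asymm hlt), inv_inv]
    obtain ⟨v, hv⟩ := tree_potential T hTconn hTacyc
      (fun a b h => if hlt : a < b then cu a b hlt else (cu b a ((hT h).resolve_left hlt))⁻¹) hs
    set w : X → R := fun x => ((v x : Subring.center R) : R) with hw_def
    set w' : X → R := fun x => (((v x)⁻¹ : M) : Subring.center R) with hw'_def
    have hww' : ∀ x : X, w x * w' x = 1 := by
      intro x
      show ((v x : Subring.center R) : R) * (((v x)⁻¹ : M) : Subring.center R) = 1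
      norm_cast
      simp
    have hw'w : ∀ x : X, w' x * w x = 1 := by
      intro x
      show (((v x)⁻¹ : M) : Subring.center R) * ((v x : Subring.center R) : R) = 1
      norm_cast
      simp
    have hcentw' : ∀ (x : X) (g : R), g * w' x = w' x * g := by
      intro x g
      exact Subring.mem_center_iff.1 (SetLike.coe_mem (((v x)⁻¹ : M) : Subring.center R)) g
    set dU : (IncidenceAlgebra R X)ˣ := IncAux.ddiagUnit w w' hww' hw'w with hdU_def
    have hdUval : (dU : IncidenceAlgebra R X) = IncAux.ddiag R X w := rfl
    have hdUinv : ((dU⁻¹ : (IncidenceAlgebra R X)ˣ) : IncidenceAlgebra R X)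
        = IncAux.ddiag R X w' := rfl
    set ι : RingAut (IncidenceAlgebra R X) := IncAux.innerConj dU with hι_def
    have hιapply : ∀ f : IncidenceAlgebra R X,
        ι f = IncAux.ddiag R X w' * f * IncAux.ddiag R X w := by
      intro f; rw [hι_def, IncAux.innerConj_apply, hdUval, hdUinv]
    have hιmult : IsMultAut ι := by
      constructor
      · intro f hf
        rw [hιapply]
        ext s t _
        rw [IncAux.mul_ddiag_apply, IncAux.ddiag_mul_apply]
        by_cases hst2 : s = t
        · subst hst2
          rw [← hcentw' s (f s s), mul_assoc, hw'w s, mul_one]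
        · rw [hf s t hst2, mul_zero, zero_mul]
      · intro f hf x
        rw [hιapply, IncAux.mul_ddiag_apply, IncAux.ddiag_mul_apply, hf x, mul_zero, zero_mul]
    have hψmult : IsMultAut (φ.trans ι : RingAut (IncidenceAlgebra R X)) := by
      constructor
      · intro f hf
        show ι (φ f) = f
        rw [hφ.1 f hf, hιmult.1 f hf]
      · intro f hf x
        exact hιmult.2 (φ f) (hφ.2 f hf) x
    have hfix : ∀ (x y : X) (h : x < y), T.Adj x y →
        (φ.trans ι : RingAut (IncidenceAlgebra R X)) (eSingle R x y h.le)
          = eSingle R x y h.le := by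
      intro x y h hadj
      have hw'xwy : w' x * w y = φ.symm (eSingle R x y h.le) x y := by
        have hMeq : ((v x)⁻¹ : M) * v y = (cu x y h)⁻¹ := by
          have h1 := hv x y hadj
          rw [dif_pos h] at h1
          rw [h1, mul_comm ((cu x y h)⁻¹) (v x), inv_mul_cancel_left]
        calc w' x * w y
            = ((((v x)⁻¹ * v y : M) : Subring.center R) : R) := by
              show (((v x)⁻¹ : M) : Subring.center R) * ((v y : Subring.center R) : R) = _
              norm_cast
          _ = ((((cu x y h)⁻¹ : M) : Subring.center R) : R) := by rw [hMeq]
          _ = φ.symm (eSingle R x y h.le) x y := rfl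
      show ι (φ (eSingle R x y h.le)) = eSingle R x y h.le
      rw [IncAux.shape hφ x y h.le, map_mul, hιmult.1 _ (IncAux.dconst_diag_supported _)]
      have hι_e : ι (eSingle R x y h.le)
          = IncAux.dconst R X (w' x * w y) * eSingle R x y h.le := by
        rw [hιapply]
        ext s t _
        rw [IncAux.mul_ddiag_apply, IncAux.ddiag_mul_apply, IncAux.dconst_mul_apply,
          IncAux.eSingle_apply]
        by_cases h2 : s = x ∧ t = y
        · obtain ⟨rfl, rfl⟩ := h2
          rw [if_pos ⟨rfl, rfl⟩, mul_one, mul_one]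
        · rw [if_neg h2, mul_zero, zero_mul, mul_zero]
      rw [hι_e, ← mul_assoc, IncAux.dconst_mul_dconst, hw'xwy, (hunit x y h).2,
        IncAux.dconst_one, one_mul]
    have h1 := Honly (φ.trans ι) hψmult hfix
    refine ⟨dU⁻¹, ?_⟩
    intro f
    have h2 : ι (φ f) = f := by
      have := congrArg (fun e : RingAut (IncidenceAlgebra R X) => e f) h1
      simpa using this
    rw [inv_inv]
    have h4 : ((dU⁻¹ : (IncidenceAlgebra R X)ˣ) : IncidenceAlgebra R X) * φ f * ↑dU = f := by
      rw [← IncAux.innerConj_apply dU (φ f)]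
      exact h2
    have h5 : (dU : IncidenceAlgebra R X) *
        (((dU⁻¹ : (IncidenceAlgebra R X)ˣ) : IncidenceAlgebra R X) * φ f * ↑dU) * ↑dU⁻¹
        = φ f := by
      simp [mul_assoc]
    rw [← h5, h4]
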